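/- Let v, v′, w, w′ be words over Ū_H ∪ {t, t⁻¹} in HNN reduced form such that v ←_m w, w ∼ w′ and w′ →_{m′} v′. Then there is a word w″ over Ū_H ∪ {t, t⁻¹} such that w ∼ w″ and elementary cancellations are possible at both positions m and m′ in w″. -/

import Mathlib

/-- `S` is a free basis of the group `G`: the induced map from the free group
on `S` is an isomorphism. -/
def IsFreeBasis {G : Type*} [Group G] (S : Set G) : Prop :=
  Function.Bijective ⇑(FreeGroup.lift (Subtype.val : S → G))

/-- Letters of words over `Ū_H ∪ {t, t⁻¹}`: an element of the free group `H`
(intended to lie in `Ū_H`), the stable letter `t`, or its inverse. -/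
inductive HLetter (X : Type*) where
  | gen : FreeGroup X → HLetter X
  | t : HLetter X
  | tinv : HLetter X

namespace HnnPaper

variable {X : Type*}

/-- A word `w` is a word over `S ∪ {t, t⁻¹}` if all its group letters lie in `S`. -/
def WordOver (S : Set (FreeGroup X)) (w : List (HLetter X)) : Prop :=
  ∀ l ∈ w, ∀ u : FreeGroup X, l = HLetter.gen u → u ∈ S

/-- A word consisting only of group letters (no `t`, `t⁻¹`). -/
def IsGenOnly (w : List (HLetter X)) : Prop :=
  ∀ l ∈ w, ∃ u : FreeGroup X, l = HLetter.gen u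

/-- The element of `H` represented by a `t`-free word (treats `t`-letters as `1`). -/
def evalH (w : List (HLetter X)) : FreeGroup X :=
  (w.map fun l => match l with
    | HLetter.gen u => u
    | _ => 1).prod

/-- `w` is in HNN reduced form: it has no subword `t⁻¹ w_i t` with `w_i` a `t`-free
word representing an element of `A = ⟨U_A⟩`, and no subword `t w_i t⁻¹` with `w_i`
a `t`-free word representing an element of `B = ⟨U_B⟩`. -/
def HNNReducedWord (UA UB : Set (FreeGroup X)) (w : List (HLetter X)) : Prop :=
  (∀ p mid s, w = p ++ [HLetter.tinv] ++ mid ++ [HLetter.t] ++ s →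
      IsGenOnly mid → evalH mid ∉ Subgroup.closure UA) ∧
  (∀ p mid s, w = p ++ [HLetter.t] ++ mid ++ [HLetter.tinv] ++ s →
      IsGenOnly mid → evalH mid ∉ Subgroup.closure UB)

variable {UA UB : Set (FreeGroup X)}

/-- The element of the HNN extension `H* = H ∗_{t,φ:A→B}` represented by a word. -/
def evalStar (φ : ↥(Subgroup.closure UA) ≃* ↥(Subgroup.closure UB))
    (w : List (HLetter X)) :
    HNNExtension (FreeGroup X) (Subgroup.closure UA) (Subgroup.closure UB) φ :=
  (w.map fun l => match l with
    | HLetter.gen u => HNNExtension.of u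
    | HLetter.t => HNNExtension.t
    | HLetter.tinv => HNNExtension.t⁻¹).prod

/-- Elementary addition: insertion of a pair `u u⁻¹` with `u ∈ Ū_H`. -/
def ElemAdd (UH : Set (FreeGroup X)) (w w' : List (HLetter X)) : Prop :=
  ∃ (p s : List (HLetter X)) (u : FreeGroup X), u ∈ UH ∪ UH⁻¹ ∧ w = p ++ s ∧
    w' = p ++ [HLetter.gen u, HLetter.gen u⁻¹] ++ s

/-- Elementary cancellation: deletion of a pair `u u⁻¹` with `u ∈ Ū_H`. -/
def ElemDel (UH : Set (FreeGroup X)) (w w' : List (HLetter X)) : Prop :=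
  ElemAdd UH w' w

/-- Elementary semicommutation: replacement of `u_a t` by `t u_b`, or of `t⁻¹ u_a`
by `u_b t⁻¹` (or conversely in either case), where `u_a ∈ Ū_A`, `u_b ∈ Ū_B` and
`φ(u_a) = u_b`. -/
def ElemSemi (φ : ↥(Subgroup.closure UA) ≃* ↥(Subgroup.closure UB))
    (w w' : List (HLetter X)) : Prop :=
  ∃ (p s : List (HLetter X)) (a : ↥(Subgroup.closure UA)), (a : FreeGroup X) ∈ UA ∪ UA⁻¹ ∧
    ((w = p ++ [HLetter.gen ↑a, HLetter.t] ++ s ∧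
      w' = p ++ [HLetter.t, HLetter.gen ↑(φ a)] ++ s) ∨
     (w = p ++ [HLetter.t, HLetter.gen ↑(φ a)] ++ s ∧
      w' = p ++ [HLetter.gen ↑a, HLetter.t] ++ s) ∨
     (w = p ++ [HLetter.tinv, HLetter.gen ↑a] ++ s ∧
      w' = p ++ [HLetter.gen ↑(φ a), HLetter.tinv] ++ s) ∨
     (w = p ++ [HLetter.gen ↑(φ a), HLetter.tinv] ++ s ∧
      w' = p ++ [HLetter.tinv, HLetter.gen ↑a] ++ s))

/-- An elementary operation: an elementary addition, cancellation or semicommutation. -/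
def ElemOp (UH : Set (FreeGroup X)) (φ : ↥(Subgroup.closure UA) ≃* ↥(Subgroup.closure UB))
    (w w' : List (HLetter X)) : Prop :=
  ElemAdd UH w w' ∨ ElemDel UH w w' ∨ ElemSemi φ w w'

/-- `w ∼ w'`: a finite sequence of elementary semicommutations turns `w` into `w'`. -/
def Sim (φ : ↥(Subgroup.closure UA) ≃* ↥(Subgroup.closure UB)) :
    List (HLetter X) → List (HLetter X) → Prop :=
  Relation.ReflTransGen (ElemSemi φ)

/-- The word `t^n` (a run of `t`'s or of `t⁻¹`'s). -/
def tPow (n : ℤ) : List (HLetter X) :=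
  if 0 ≤ n then List.replicate n.toNat HLetter.t
  else List.replicate (-n).toNat HLetter.tinv

/-- The word `t^{n₀} u₁ t^{n₁} ⋯ u_k t^{n_k}` determined by `n₀` and the list
`[(u₁,n₁),…,(u_k,n_k)]`. -/
def blockWord (n0 : ℤ) (l : List (FreeGroup X × ℤ)) : List (HLetter X) :=
  tPow n0 ++ l.flatMap (fun p => HLetter.gen p.1 :: tPow p.2)

/-- `w →_m v`: `w ≡ t^{n₀} u₁ t^{n₁} ⋯ u_k t^{n_k}` with `u_{m+1} ≡ u_m⁻¹` and
`n_m = 0`, and `v` is obtained from `w` by the elementary cancellation of the pair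
`u_m u_{m+1}` (so `t^{n_{m-1}}` becomes `t^{n_{m-1}+n_{m+1}}`). -/
def CancelAt (m : ℕ) (w v : List (HLetter X)) : Prop :=
  ∃ (n0 : ℤ) (pre post : List (FreeGroup X × ℤ)) (u : FreeGroup X) (n' : ℤ),
    pre.length + 1 = m ∧
    w = blockWord n0 (pre ++ [(u, 0), (u⁻¹, n')] ++ post) ∧
    ((pre = [] ∧ v = blockWord (n0 + n') post) ∨
     (∃ pre' u' nl, pre = pre' ++ [(u', nl)] ∧
        v = blockWord n0 (pre' ++ [(u', nl + n')] ++ post)))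

/-- `w ⇝_m v`: there are HNN reduced words `w′, v′` with `w ∼ w′ →_m v′ ∼ v`. -/
def RsaAt (φ : ↥(Subgroup.closure UA) ≃* ↥(Subgroup.closure UB)) (m : ℕ)
    (w v : List (HLetter X)) : Prop :=
  ∃ w' v', HNNReducedWord UA UB w' ∧ HNNReducedWord UA UB v' ∧
    Sim φ w w' ∧ CancelAt m w' v' ∧ Sim φ v' v

/-- `w ⇝ v`: `w ⇝_m v` for some `m`. -/
def Rsa (φ : ↥(Subgroup.closure UA) ≃* ↥(Subgroup.closure UB))
    (w v : List (HLetter X)) : Prop :=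
  ∃ m, RsaAt φ m w v

/-- `w ≿ v`: either `w ∼ v` or there is a sequence `w ≡ w₀ ⇝ w₁ ⇝ ⋯ ⇝ w_k ≡ v`
with `k ≥ 1`. -/
def Succsim (φ : ↥(Subgroup.closure UA) ≃* ↥(Subgroup.closure UB))
    (w v : List (HLetter X)) : Prop :=
  Sim φ w v ∨ Relation.TransGen (Rsa φ) w v

/-- `v` is in most reduced form: it is HNN reduced and no `v ⇝ v'` is possible. -/
def MostReduced (φ : ↥(Subgroup.closure UA) ≃* ↥(Subgroup.closure UB))
    (v : List (HLetter X)) : Prop :=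
  HNNReducedWord UA UB v ∧ ∀ v', ¬ Rsa φ v v'

/-- `MRF(w)`: the set of words `v` with `v ≾ w` that are in most reduced form. -/
def MRF (φ : ↥(Subgroup.closure UA) ≃* ↥(Subgroup.closure UB))
    (w : List (HLetter X)) : Set (List (HLetter X)) :=
  {v | Succsim φ w v ∧ MostReduced φ v}

/-- The partial bijection `Ū_A → Ū_B` induced by `φ`, as a relation on `H`. -/
def PhiRel (φ : ↥(Subgroup.closure UA) ≃* ↥(Subgroup.closure UB))
    (u v : FreeGroup X) : Prop :=
  ∃ a : ↥(Subgroup.closure UA), (a : FreeGroup X) ∈ UA ∪ UA⁻¹ ∧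
    (a : FreeGroup X) = u ∧ ((φ a : ↥(Subgroup.closure UB)) : FreeGroup X) = v

/-- `v = φ^n(u)` for `n ∈ ℕ`. -/
def PhiPowN (φ : ↥(Subgroup.closure UA) ≃* ↥(Subgroup.closure UB)) :
    ℕ → FreeGroup X → FreeGroup X → Prop
  | 0 => Eq
  | (n + 1) => fun u v => ∃ w, PhiPowN φ n u w ∧ PhiRel φ w v

/-- `v = φ^z(u)` for `z ∈ ℤ`. -/
def PhiZPow (φ : ↥(Subgroup.closure UA) ≃* ↥(Subgroup.closure UB)) (z : ℤ)
    (u v : FreeGroup X) : Prop :=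
  if 0 ≤ z then PhiPowN φ z.toNat u v else PhiPowN φ (-z).toNat v u

end HnnPaper
namespace HnnPaper

variable {X : Type*} {UA UB : Set (FreeGroup X)}
variable {φ : ↥(Subgroup.closure UA) ≃* ↥(Subgroup.closure UB)}

/-! ### Basic lemmas on `PhiRel`, `PhiPowN`, `PhiZPow` -/

lemma PhiRel.det_fwd {u v v' : FreeGroup X} (h : PhiRel φ u v) (h' : PhiRel φ u v') :
    v = v' := by
  obtain ⟨a, -, rfl, rfl⟩ := h
  obtain ⟨a', -, ha', rfl⟩ := h'
  rw [Subtype.coe_injective ha']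

lemma PhiRel.det_bwd {u u' v : FreeGroup X} (h : PhiRel φ u v) (h' : PhiRel φ u' v) :
    u = u' := by
  obtain ⟨a, -, rfl, hb⟩ := h
  obtain ⟨a', -, rfl, hb'⟩ := h'
  have : φ a = φ a' := Subtype.coe_injective (hb.trans hb'.symm)
  rw [φ.injective this]

lemma PhiRel.inv {u v : FreeGroup X} (h : PhiRel φ u v) : PhiRel φ u⁻¹ v⁻¹ := by
  obtain ⟨a, ha, rfl, rfl⟩ := h
  refine ⟨a⁻¹, ?_, rfl, by simp⟩
  rcases ha with h | h
  · exact Or.inr (by simpa [Set.mem_inv] using h)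
  · exact Or.inl (by simpa [Set.mem_inv] using h)

lemma PhiRel.mem_closureA {u v : FreeGroup X} (h : PhiRel φ u v) :
    u ∈ Subgroup.closure UA := by
  obtain ⟨a, -, rfl, -⟩ := h; exact a.2

lemma PhiRel.mem_closureB {u v : FreeGroup X} (h : PhiRel φ u v) :
    v ∈ Subgroup.closure UB := by
  obtain ⟨a, -, -, rfl⟩ := h; exact (φ a).2

lemma PhiPowN.head {n : ℕ} {y z : FreeGroup X} (h : PhiPowN φ (n + 1) y z) :
    ∃ w, PhiRel φ y w ∧ PhiPowN φ n w z := by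
  induction n generalizing z with
  | zero => obtain ⟨w, hw, hr⟩ := h; cases hw; exact ⟨z, hr, rfl⟩
  | succ n ih =>
    obtain ⟨w, hw, hr⟩ := h
    obtain ⟨w', hw', hw'w⟩ := ih hw
    exact ⟨w', hw', w, hw'w, hr⟩

lemma PhiPowN.cons {n : ℕ} {y w z : FreeGroup X} (h : PhiRel φ y w)
    (h' : PhiPowN φ n w z) : PhiPowN φ (n + 1) y z := by
  induction n generalizing z with
  | zero => cases h'; exact ⟨y, rfl, h⟩
  | succ n ih =>
    obtain ⟨w', hw', hr⟩ := h'
    exact ⟨w', ih hw', hr⟩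

lemma PhiPowN.inv {n : ℕ} {u v : FreeGroup X} (h : PhiPowN φ n u v) :
    PhiPowN φ n u⁻¹ v⁻¹ := by
  induction n generalizing v with
  | zero => cases h; rfl
  | succ n ih => obtain ⟨w, hw, hr⟩ := h; exact ⟨w⁻¹, ih hw, hr.inv⟩

lemma PhiZPow.zero_iff {u v : FreeGroup X} : PhiZPow φ 0 u v ↔ u = v := by
  simp [PhiZPow, PhiPowN]

lemma PhiZPow.refl (u : FreeGroup X) : PhiZPow φ 0 u u := PhiZPow.zero_iff.2 rfl

lemma PhiZPow.inv {d : ℤ} {u v : FreeGroup X} (h : PhiZPow φ d u v) :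
    PhiZPow φ d u⁻¹ v⁻¹ := by
  unfold PhiZPow at *
  by_cases hd : 0 ≤ d
  · rw [if_pos hd] at h ⊢; exact h.inv
  · rw [if_neg hd] at h ⊢; exact h.inv

/-- snoc at the target: `x →^d y →_R z` gives `x →^(d+1) z`. -/
lemma PhiZPow.snoc_pos {d : ℤ} {x y z : FreeGroup X} (h : PhiZPow φ d x y)
    (hr : PhiRel φ y z) : PhiZPow φ (d + 1) x z := by
  unfold PhiZPow at *
  by_cases hd : 0 ≤ d
  · rw [if_pos hd] at h
    rw [if_pos (by omega), show (d+1).toNat = d.toNat + 1 by omega]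
    exact ⟨y, h, hr⟩
  · rw [if_neg hd] at h
    have hn : (-d).toNat = ((-d).toNat - 1) + 1 := by omega
    rw [hn] at h
    obtain ⟨w, hyw, hwx⟩ := h.head
    have hwz : w = z := hyw.det_fwd hr
    subst hwz
    by_cases hd1 : 0 ≤ d + 1
    · rw [if_pos hd1]
      have hd' : d = -1 := by omega
      subst hd'
      have h0 : (-(-1:ℤ)).toNat - 1 = 0 := by omega
      rw [h0] at hwx
      rw [show ((-1:ℤ)+1).toNat = 0 from rfl]
      exact hwx.symm
    · rw [if_neg hd1, show (-(d+1)).toNat = (-d).toNat - 1 by omega]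
      exact hwx

/-- snoc backwards at the target: `x →^d y ←_R z` gives `x →^(d-1) z`. -/
lemma PhiZPow.snoc_neg {d : ℤ} {x y z : FreeGroup X} (h : PhiZPow φ d x y)
    (hr : PhiRel φ z y) : PhiZPow φ (d - 1) x z := by
  unfold PhiZPow at *
  by_cases hd : 0 ≤ d
  · rw [if_pos hd] at h
    by_cases hd1 : 0 ≤ d - 1
    · rw [if_pos hd1]
      have hn : d.toNat = (d.toNat - 1) + 1 := by omega
      rw [hn] at h
      obtain ⟨w, hw, hr'⟩ := h
      have hwz : w = z := hr'.det_bwd hr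
      subst hwz
      rw [show (d-1).toNat = d.toNat - 1 by omega]
      exact hw
    · rw [if_neg hd1]
      have hd' : d = 0 := by omega
      subst hd'
      cases h
      rw [show (-(0-1:ℤ)).toNat = 1 from rfl]
      exact ⟨z, rfl, hr⟩
  · rw [if_neg hd] at h
    rw [if_neg (by omega), show (-(d-1)).toNat = (-d).toNat + 1 by omega]
    exact PhiPowN.cons hr h

/-- head at the source: `w →_R y`, `w →^c z` gives `y →^(c-1) z`. -/
lemma PhiZPow.head_pos {c : ℤ} {w y z : FreeGroup X} (hr : PhiRel φ w y)
    (h : PhiZPow φ c w z) : PhiZPow φ (c - 1) y z := by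
  unfold PhiZPow at *
  by_cases hc : 0 ≤ c
  · rw [if_pos hc] at h
    by_cases hc1 : 0 ≤ c - 1
    · rw [if_pos hc1]
      have hn : c.toNat = (c.toNat - 1) + 1 := by omega
      rw [hn] at h
      obtain ⟨w', hww', hrest⟩ := h.head
      have hw'y : w' = y := hww'.det_fwd hr
      subst hw'y
      rw [show (c-1).toNat = c.toNat - 1 by omega]
      exact hrest
    · rw [if_neg hc1]
      have hc' : c = 0 := by omega
      subst hc'
      cases h
      rw [show (-(0-1:ℤ)).toNat = 1 from rfl]
      exact ⟨w, rfl, hr⟩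
  · rw [if_neg hc] at h
    rw [if_neg (by omega), show (-(c-1)).toNat = (-c).toNat + 1 by omega]
    exact ⟨w, h, hr⟩

/-- head backwards at the source: `y →_R w`, `w →^c z` gives `y →^(c+1) z`. -/
lemma PhiZPow.head_neg {c : ℤ} {w y z : FreeGroup X} (hr : PhiRel φ y w)
    (h : PhiZPow φ c w z) : PhiZPow φ (c + 1) y z := by
  unfold PhiZPow at *
  by_cases hc : 0 ≤ c
  · rw [if_pos hc] at h
    rw [if_pos (by omega), show (c+1).toNat = c.toNat + 1 by omega]
    exact PhiPowN.cons hr h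
  · rw [if_neg hc] at h
    have hn : (-c).toNat = ((-c).toNat - 1) + 1 := by omega
    rw [hn] at h
    obtain ⟨w', hzw', hr'⟩ := h
    have hw'y : w' = y := hr'.det_bwd hr
    subst hw'y
    by_cases hc1 : 0 ≤ c + 1
    · rw [if_pos hc1]
      have hc' : c = -1 := by omega
      subst hc'
      have h0 : (-(-1:ℤ)).toNat - 1 = 0 := by omega
      rw [h0] at hzw'
      rw [show ((-1:ℤ)+1).toNat = 0 from rfl]
      exact hzw'.symm
    · rw [if_neg hc1, show (-(c+1)).toNat = (-c).toNat - 1 by omega]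
      exact hzw'

/-- Composition: two chains from the same source. -/
lemma PhiZPow.comp {a b : ℤ} {x y z : FreeGroup X} (ha : PhiZPow φ a x y)
    (hb : PhiZPow φ b x z) : PhiZPow φ (b - a) y z := by
  induction a using Int.induction_on generalizing y with
  | zero => rw [PhiZPow.zero_iff] at ha; subst ha; simpa using hb
  | succ n ih =>
    unfold PhiZPow at ha
    rw [if_pos (by positivity), show ((n:ℤ)+1).toNat = n + 1 by omega] at ha
    obtain ⟨w, hw, hr⟩ := ha
    have hw' : PhiZPow φ n x w := by
      unfold PhiZPow; rw [if_pos (by positivity), Int.toNat_natCast]; exact hw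
    have h2 := PhiZPow.head_pos hr (ih hw')
    have he : b - (↑n + 1) = b - ↑n - 1 := by ring
    rw [he]; exact h2
  | pred n ih =>
    have hn' : PhiPowN φ (n + 1) y x := by
      unfold PhiZPow at ha
      rw [if_neg (by omega), show (-(-(n:ℤ)-1)).toNat = n + 1 by omega] at ha
      exact ha
    obtain ⟨w, hyw, hwx⟩ := hn'.head
    have hw' : PhiZPow φ (-(n:ℤ)) x w := by
      unfold PhiZPow
      rcases Nat.eq_zero_or_pos n with h0 | h0
      · subst h0
        simp only [Nat.cast_zero, neg_zero, le_refl, if_pos, Int.toNat_zero]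
        cases hwx; rfl
      · rw [if_neg (by omega), show (-(-(n:ℤ))).toNat = n by omega]
        exact hwx
    have h2 := PhiZPow.head_neg hyw (ih hw')
    have he : b - (-(n:ℤ) - 1) = b - -(n:ℤ) + 1 := by ring
    rw [he]; exact h2

end HnnPaper
namespace HnnPaper

variable {X : Type*} {UA UB : Set (FreeGroup X)}
variable {φ : ↥(Subgroup.closure UA) ≃* ↥(Subgroup.closure UB)}

/-! ### `t`-count and skeleton of a word -/

/-- The signed number of `t`-letters in a word. -/
def tcount : List (HLetter X) → ℤ
  | [] => 0
  | HLetter.t :: r => 1 + tcount r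
  | HLetter.tinv :: r => -1 + tcount r
  | HLetter.gen _ :: r => tcount r

/-- The skeleton of a word: for each `gen` letter, the group element together with
the signed number of `t`'s preceding it (starting count `c`). -/
def skel : List (HLetter X) → ℤ → List (FreeGroup X × ℤ)
  | [], _ => []
  | HLetter.gen u :: r, c => (u, c) :: skel r c
  | HLetter.t :: r, c => skel r (c + 1)
  | HLetter.tinv :: r, c => skel r (c - 1)

lemma tcount_append (l₁ l₂ : List (HLetter X)) :
    tcount (l₁ ++ l₂) = tcount l₁ + tcount l₂ := by
  induction l₁ with
  | nil => simp [tcount]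
  | cons a r ih => cases a <;> simp [tcount, ih] <;> ring

lemma skel_append (l₁ l₂ : List (HLetter X)) (c : ℤ) :
    skel (l₁ ++ l₂) c = skel l₁ c ++ skel l₂ (c + tcount l₁) := by
  induction l₁ generalizing c with
  | nil => simp [skel, tcount]
  | cons a r ih =>
    cases a <;> simp only [List.cons_append, skel, tcount, List.append_eq, ih] <;>
      (congr 2; ring)

lemma tcount_replicate_t (k : ℕ) : tcount (List.replicate k (HLetter.t (X := X))) = k := by
  induction k with
  | zero => rfl
  | succ k ih => rw [List.replicate_succ]; show (1:ℤ) + _ = _; rw [ih]; push_cast; ring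

lemma tcount_replicate_tinv (k : ℕ) :
    tcount (List.replicate k (HLetter.tinv (X := X))) = -(k : ℤ) := by
  induction k with
  | zero => rfl
  | succ k ih => rw [List.replicate_succ]; show (-1:ℤ) + _ = _; rw [ih]; push_cast; ring

lemma skel_replicate_t (k : ℕ) (c : ℤ) :
    skel (List.replicate k (HLetter.t (X := X))) c = [] := by
  induction k generalizing c with
  | zero => rfl
  | succ k ih => rw [List.replicate_succ]; exact ih _

lemma skel_replicate_tinv (k : ℕ) (c : ℤ) :
    skel (List.replicate k (HLetter.tinv (X := X))) c = [] := by
  induction k generalizing c with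
  | zero => rfl
  | succ k ih => rw [List.replicate_succ]; exact ih _

lemma tcount_tPow (n : ℤ) : tcount (tPow n : List (HLetter X)) = n := by
  unfold tPow
  split <;> rename_i h
  · rw [tcount_replicate_t]; omega
  · rw [tcount_replicate_tinv]; omega

lemma skel_tPow (n : ℤ) (c : ℤ) : skel (tPow n : List (HLetter X)) c = [] := by
  unfold tPow
  split
  · exact skel_replicate_t _ _
  · exact skel_replicate_tinv _ _

/-! ### Block words -/

/-- The body of a block word. -/
def bw0 (l : List (FreeGroup X × ℤ)) : List (HLetter X) :=
  l.flatMap fun p => HLetter.gen p.1 :: tPow p.2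

lemma blockWord_eq (n0 : ℤ) (l : List (FreeGroup X × ℤ)) :
    blockWord n0 l = tPow n0 ++ bw0 l := rfl

lemma bw0_nil : bw0 ([] : List (FreeGroup X × ℤ)) = [] := rfl

lemma bw0_append (l₁ l₂ : List (FreeGroup X × ℤ)) :
    bw0 (l₁ ++ l₂) = bw0 l₁ ++ bw0 l₂ := by
  simp [bw0]

lemma bw0_cons (p : FreeGroup X × ℤ) (l : List (FreeGroup X × ℤ)) :
    bw0 (p :: l) = HLetter.gen p.1 :: (tPow p.2 ++ bw0 l) := by
  simp [bw0]

/-- Sum of the exponents. -/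
def sumExp (l : List (FreeGroup X × ℤ)) : ℤ := (l.map Prod.snd).sum

/-- The skeleton of a block-word body. -/
def skelB (c : ℤ) : List (FreeGroup X × ℤ) → List (FreeGroup X × ℤ)
  | [] => []
  | (u, n) :: l => (u, c) :: skelB (c + n) l

lemma skel_bw0 (l : List (FreeGroup X × ℤ)) (c : ℤ) :
    skel (bw0 l) c = skelB c l := by
  induction l generalizing c with
  | nil => rfl
  | cons p l ih =>
    obtain ⟨u, n⟩ := p
    rw [bw0_cons]
    show skel (HLetter.gen u :: (tPow n ++ bw0 l)) c = _
    rw [skel]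
    rw [skel_append, skel_tPow, tcount_tPow]
    simp [skelB, ih]

lemma skel_blockWord (n0 : ℤ) (l : List (FreeGroup X × ℤ)) (c : ℤ) :
    skel (blockWord n0 l) c = skelB (c + n0) l := by
  rw [blockWord_eq, skel_append, skel_tPow, tcount_tPow, skel_bw0]
  simp

lemma skelB_length (c : ℤ) (l : List (FreeGroup X × ℤ)) :
    (skelB c l).length = l.length := by
  induction l generalizing c with
  | nil => rfl
  | cons p l ih => obtain ⟨u, n⟩ := p; simp [skelB, ih]

lemma skelB_getElem (c : ℤ) (l : List (FreeGroup X × ℤ)) (i : ℕ) (hi : i < l.length) :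
    (skelB c l)[i]'(by rw [skelB_length]; exact hi) =
      ((l[i]'hi).1, c + sumExp (l.take i)) := by
  induction l generalizing c i with
  | nil => simp at hi
  | cons p l ih =>
    obtain ⟨u, n⟩ := p
    cases i with
    | zero => simp [skelB, sumExp]
    | succ i =>
      simp only [skelB, List.getElem_cons_succ, List.take_succ_cons]
      rw [ih (c + n) i (by simpa using hi)]
      simp [sumExp]
      ring

end HnnPaper
namespace HnnPaper

variable {X : Type*} {UA UB UH : Set (FreeGroup X)}
variable {φ : ↥(Subgroup.closure UA) ≃* ↥(Subgroup.closure UB)}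

lemma skel_mid (p L s : List (HLetter X)) :
    skel (p ++ L ++ s) 0 = skel p 0 ++ skel L (tcount p) ++ skel s (tcount p + tcount L) := by
  rw [skel_append, skel_append, tcount_append]
  simp

/-- The skeleton relation underlying the invariant of `∼`. -/
def pairRel (φ : ↥(Subgroup.closure UA) ≃* ↥(Subgroup.closure UB))
    (p q : FreeGroup X × ℤ) : Prop :=
  PhiZPow φ (q.2 - p.2) p.1 q.1

/-- The invariant preserved by `∼`. -/
def Inv (φ : ↥(Subgroup.closure UA) ≃* ↥(Subgroup.closure UB))
    (w w' : List (HLetter X)) : Prop :=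
  List.Forall₂ (pairRel φ) (skel w 0) (skel w' 0)

lemma Inv.refl (w : List (HLetter X)) : Inv φ w w := by
  apply List.forall₂_of_length_eq_of_get rfl
  intro i h₁ h₂
  simpa [pairRel] using PhiZPow.refl (φ := φ) ((skel w 0).get ⟨i, h₁⟩).1

lemma ElemSemi.skel_step {b c : List (HLetter X)} (h : ElemSemi φ b c) :
    ∃ (P S : List (FreeGroup X × ℤ)) (x y : FreeGroup X) (cx cy : ℤ),
      skel b 0 = P ++ (x, cx) :: S ∧ skel c 0 = P ++ (y, cy) :: S ∧
      ((cy = cx + 1 ∧ PhiRel φ x y) ∨ (cy = cx - 1 ∧ PhiRel φ y x)) := by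
  obtain ⟨p, s, a, ha, hcase⟩ := h
  have hrel : PhiRel φ ↑a ↑(φ a) := ⟨a, ha, rfl, rfl⟩
  rcases hcase with ⟨hb, hc⟩ | ⟨hb, hc⟩ | ⟨hb, hc⟩ | ⟨hb, hc⟩ <;> subst hb <;> subst hc
  · exact ⟨skel p 0, skel s (tcount p + 1), ↑a, ↑(φ a), tcount p, tcount p + 1,
      by rw [skel_mid]; simp [skel, tcount],
      by rw [skel_mid]; simp [skel, tcount], Or.inl ⟨rfl, hrel⟩⟩
  · exact ⟨skel p 0, skel s (tcount p + 1), ↑(φ a), ↑a, tcount p + 1, tcount p,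
      by rw [skel_mid]; simp [skel, tcount],
      by rw [skel_mid]; simp [skel, tcount], Or.inr ⟨by ring, hrel⟩⟩
  · exact ⟨skel p 0, skel s (tcount p + -1), ↑a, ↑(φ a), tcount p - 1, tcount p,
      by rw [skel_mid]; simp [skel, tcount],
      by rw [skel_mid]; simp [skel, tcount], Or.inl ⟨by ring, hrel⟩⟩
  · exact ⟨skel p 0, skel s (tcount p + -1), ↑(φ a), ↑a, tcount p, tcount p - 1,
      by rw [skel_mid]; simp [skel, tcount],
      by rw [skel_mid]; simp [skel, tcount], Or.inr ⟨rfl, hrel⟩⟩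

lemma forall₂_split {α β : Type*} {R : α → β → Prop} :
    ∀ {P : List β} {l : List α} {b : β} {S : List β}, List.Forall₂ R l (P ++ b :: S) →
    ∃ lP a lS, l = lP ++ a :: lS ∧ List.Forall₂ R lP P ∧ R a b ∧ List.Forall₂ R lS S := by
  intro P
  induction P with
  | nil =>
    intro l b S h
    rw [List.nil_append, List.forall₂_cons_right_iff] at h
    obtain ⟨a, l', hr, hf, rfl⟩ := h
    exact ⟨[], a, l', rfl, List.Forall₂.nil, hr, hf⟩
  | cons q P ih =>
    intro l b S h
    rw [List.cons_append, List.forall₂_cons_right_iff] at h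
    obtain ⟨a0, l', hr0, hf, rfl⟩ := h
    obtain ⟨lP, a, lS, rfl, h1, h2, h3⟩ := ih hf
    exact ⟨a0 :: lP, a, lS, rfl, List.Forall₂.cons hr0 h1, h2, h3⟩

lemma Inv.step {w b c : List (HLetter X)} (h : Inv φ w b) (hs : ElemSemi φ b c) :
    Inv φ w c := by
  obtain ⟨P, S, x, y, cx, cy, hb, hc, hd⟩ := hs.skel_step
  unfold Inv at *
  rw [hb] at h
  obtain ⟨lP, a, lS, hw, h1, h2, h3⟩ := forall₂_split h
  rw [hw, hc]
  refine List.rel_append h1 (List.Forall₂.cons ?_ h3)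
  unfold pairRel at h2 ⊢
  rcases hd with ⟨rfl, hr⟩ | ⟨rfl, hr⟩
  · have he : cx + 1 - a.2 = (cx - a.2) + 1 := by ring
    rw [he]; exact h2.snoc_pos hr
  · have he : cx - 1 - a.2 = (cx - a.2) - 1 := by ring
    rw [he]; exact h2.snoc_neg hr

lemma Sim.inv {w w' : List (HLetter X)} (h : Sim φ w w') : Inv φ w w' := by
  induction h with
  | refl => exact Inv.refl w
  | tail _ hs ih => exact ih.step hs

lemma ElemSemi.symm {b c : List (HLetter X)} (h : ElemSemi φ b c) : ElemSemi φ c b := by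
  obtain ⟨p, s, a, ha, hcase⟩ := h
  exact ⟨p, s, a, ha, by tauto⟩

lemma Sim.symm {w w' : List (HLetter X)} (h : Sim φ w w') : Sim φ w' w := by
  induction h with
  | refl => exact Relation.ReflTransGen.refl
  | tail _ hs ih => exact Relation.ReflTransGen.head hs.symm ih

lemma PhiZPow.memA_of_pos {n : ℤ} {g G : FreeGroup X} (h : PhiZPow φ n g G)
    (hn : 0 < n) : g ∈ Subgroup.closure UA := by
  unfold PhiZPow at h
  rw [if_pos (by omega), show n.toNat = (n.toNat - 1) + 1 by omega] at h
  obtain ⟨w, hr, -⟩ := h.head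
  exact hr.mem_closureA

lemma PhiZPow.memB_of_neg {n : ℤ} {g G : FreeGroup X} (h : PhiZPow φ n g G)
    (hn : n < 0) : g ∈ Subgroup.closure UB := by
  unfold PhiZPow at h
  rw [if_neg (by omega), show (-n).toNat = ((-n).toNat - 1) + 1 by omega] at h
  obtain ⟨w, -, hr⟩ := h
  exact hr.mem_closureB

end HnnPaper
namespace HnnPaper

variable {X : Type*} {UA UB UH : Set (FreeGroup X)}
variable {φ : ↥(Subgroup.closure UA) ≃* ↥(Subgroup.closure UB)}

lemma tPow_zero : (tPow 0 : List (HLetter X)) = [] := by simp [tPow]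

lemma tPow_nonneg (n : ℤ) (h : 0 ≤ n) :
    (tPow n : List (HLetter X)) = List.replicate n.toNat HLetter.t := by
  simp [tPow, h]

lemma tPow_neg (n : ℤ) (h : ¬ 0 ≤ n) :
    (tPow n : List (HLetter X)) = List.replicate (-n).toNat HLetter.tinv := by
  simp [tPow, h]

lemma tPow_pos_head (n : ℤ) (h : 1 ≤ n) :
    (tPow n : List (HLetter X)) = HLetter.t :: tPow (n - 1) := by
  rw [tPow_nonneg n (by omega), tPow_nonneg _ (by omega),
    show n.toNat = (n - 1).toNat + 1 by omega, List.replicate_succ]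

lemma tPow_neg_head (n : ℤ) (h : n ≤ -1) :
    (tPow n : List (HLetter X)) = HLetter.tinv :: tPow (n + 1) := by
  rw [tPow_neg n (by omega)]
  by_cases h1 : n + 1 = 0
  · rw [h1, tPow_zero, show (-n).toNat = 1 by omega]; rfl
  · rw [tPow_neg _ (by omega), show (-n).toNat = (-(n+1)).toNat + 1 by omega,
      List.replicate_succ]

lemma tPow_pos_last (n : ℤ) (h : 1 ≤ n) :
    (tPow n : List (HLetter X)) = tPow (n - 1) ++ [HLetter.t] := by
  rw [tPow_nonneg n (by omega), tPow_nonneg _ (by omega),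
    show n.toNat = (n - 1).toNat + 1 by omega, List.replicate_succ']

lemma tPow_neg_last (n : ℤ) (h : n ≤ -1) :
    (tPow n : List (HLetter X)) = tPow (n + 1) ++ [HLetter.tinv] := by
  rw [tPow_neg n (by omega)]
  by_cases h1 : n + 1 = 0
  · rw [h1, tPow_zero, show (-n).toNat = 1 by omega]; rfl
  · rw [tPow_neg _ (by omega), show (-n).toNat = (-(n+1)).toNat + 1 by omega,
      List.replicate_succ']

lemma tPow_add_same_sign (q n : ℤ) (h : (0 ≤ q ∧ 0 ≤ n) ∨ (q ≤ 0 ∧ n ≤ 0)) :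
    (tPow (q + n) : List (HLetter X)) = tPow q ++ tPow n := by
  rcases h with ⟨hq, hn⟩ | ⟨hq, hn⟩
  · rw [tPow_nonneg q hq, tPow_nonneg n hn, tPow_nonneg _ (by omega),
      show (q + n).toNat = q.toNat + n.toNat by omega, List.replicate_add]
  · by_cases hq0 : q = 0
    · subst hq0; simp [tPow_zero]
    by_cases hn0 : n = 0
    · subst hn0; simp [tPow_zero]
    rw [tPow_neg q (by omega), tPow_neg n (by omega), tPow_neg _ (by omega),
      show (-(q + n)).toNat = (-q).toNat + (-n).toNat by omega, List.replicate_add]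

/-- Left shift across a generator, positive power case. -/
lemma sim_shift_left_pos (S : List (HLetter X)) (z : FreeGroup X) (k : ℕ) :
    ∀ (P : List (HLetter X)) (y : FreeGroup X), PhiPowN φ k y z →
    Sim φ (P ++ HLetter.gen y :: (List.replicate k HLetter.t ++ S))
      ((P ++ List.replicate k HLetter.t) ++ HLetter.gen z :: S) := by
  induction k with
  | zero => intro P y h; cases h; simp; exact Relation.ReflTransGen.refl
  | succ k ih =>
    intro P y h
    obtain ⟨v, hr, hrest⟩ := h.head
    obtain ⟨a, ha, hay, hav⟩ := hr
    have step : ElemSemi φ (P ++ HLetter.gen y :: (List.replicate (k+1) HLetter.t ++ S))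
        ((P ++ [HLetter.t]) ++ HLetter.gen v :: (List.replicate k HLetter.t ++ S)) := by
      refine ⟨P, List.replicate k HLetter.t ++ S, a, ha, Or.inl ⟨?_, ?_⟩⟩
      · rw [hay, List.replicate_succ]; simp
      · rw [hav]; simp
    have tail := ih (P ++ [HLetter.t]) v hrest
    have : Sim φ (P ++ HLetter.gen y :: (List.replicate (k+1) HLetter.t ++ S))
        (((P ++ [HLetter.t]) ++ List.replicate k HLetter.t) ++ HLetter.gen z :: S) :=
      Relation.ReflTransGen.head step tail
    simpa [List.replicate_succ, List.append_assoc] using this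

/-- Left shift across a generator, negative power case. -/
lemma sim_shift_left_neg (S : List (HLetter X)) (z : FreeGroup X) (k : ℕ) :
    ∀ (P : List (HLetter X)) (y : FreeGroup X), PhiPowN φ k z y →
    Sim φ (P ++ HLetter.gen y :: (List.replicate k HLetter.tinv ++ S))
      ((P ++ List.replicate k HLetter.tinv) ++ HLetter.gen z :: S) := by
  induction k with
  | zero => intro P y h; cases h; simp; exact Relation.ReflTransGen.refl
  | succ k ih =>
    intro P y h
    obtain ⟨v, hrest, hr⟩ := h
    obtain ⟨a, ha, hav, hay⟩ := hr
    have step : ElemSemi φ (P ++ HLetter.gen y :: (List.replicate (k+1) HLetter.tinv ++ S))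
        ((P ++ [HLetter.tinv]) ++ HLetter.gen v :: (List.replicate k HLetter.tinv ++ S)) := by
      refine ⟨P, List.replicate k HLetter.tinv ++ S, a, ha, Or.inr (Or.inr (Or.inr ⟨?_, ?_⟩))⟩
      · rw [hay, List.replicate_succ]; simp
      · rw [hav]; simp
    have tail := ih (P ++ [HLetter.tinv]) v hrest
    have : Sim φ (P ++ HLetter.gen y :: (List.replicate (k+1) HLetter.tinv ++ S))
        (((P ++ [HLetter.tinv]) ++ List.replicate k HLetter.tinv) ++ HLetter.gen z :: S) :=
      Relation.ReflTransGen.head step tail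
    simpa [List.replicate_succ, List.append_assoc] using this

/-- Left shift of a `t`-run across a generator. -/
lemma sim_shift_left (P S : List (HLetter X)) (n : ℤ) {y z : FreeGroup X}
    (h : PhiZPow φ n y z) :
    Sim φ (P ++ HLetter.gen y :: (tPow n ++ S)) ((P ++ tPow n) ++ HLetter.gen z :: S) := by
  unfold PhiZPow at h
  by_cases hn : 0 ≤ n
  · rw [if_pos hn] at h
    rw [tPow_nonneg n hn]
    exact sim_shift_left_pos S z n.toNat P y h
  · rw [if_neg hn] at h
    rw [tPow_neg n hn]
    exact sim_shift_left_neg S z (-n).toNat P y h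

lemma not_gen_mem_tPow {n : ℤ} {u : FreeGroup X} :
    HLetter.gen u ∉ (tPow n : List (HLetter X)) := by
  intro h
  unfold tPow at h
  split at h <;> simp_all [List.mem_replicate]

lemma wordOver_blockWord {S : Set (FreeGroup X)} {n0 : ℤ} {L : List (FreeGroup X × ℤ)} :
    WordOver S (blockWord n0 L) ↔ ∀ q ∈ L, q.1 ∈ S := by
  constructor
  · intro h q hq
    refine h (HLetter.gen q.1) ?_ q.1 rfl
    rw [blockWord_eq]
    refine List.mem_append_right _ ?_
    unfold bw0
    rw [List.mem_flatMap]
    exact ⟨q, hq, List.mem_cons_self⟩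
  · intro h l hl u hu
    subst hu
    rw [blockWord_eq] at hl
    rcases List.mem_append.1 hl with h1 | h1
    · exact absurd h1 not_gen_mem_tPow
    · unfold bw0 at h1
      rw [List.mem_flatMap] at h1
      obtain ⟨q, hq, hmem⟩ := h1
      rcases List.mem_cons.1 hmem with he | he
      · obtain rfl : u = q.1 := by injection he
        exact h q hq
      · exact absurd he not_gen_mem_tPow

end HnnPaper
namespace HnnPaper

variable {X : Type*} {UA UB : Set (FreeGroup X)}
variable {φ : ↥(Subgroup.closure UA) ≃* ↥(Subgroup.closure UB)}

lemma sumExp_append (l₁ l₂ : List (FreeGroup X × ℤ)) :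
    sumExp (l₁ ++ l₂) = sumExp l₁ + sumExp l₂ := by simp [sumExp]

lemma sumExp_take_succ (l : List (FreeGroup X × ℤ)) (i : ℕ) (h : i < l.length) :
    sumExp (l.take (i+1)) = sumExp (l.take i) + (l[i]'h).2 := by
  induction l generalizing i with
  | nil => simp at h
  | cons a l ih =>
    cases i with
    | zero => simp [sumExp]
    | succ i =>
      simp only [List.take_succ_cons, List.getElem_cons_succ]
      rw [show sumExp (a :: l.take (i+1)) = a.2 + sumExp (l.take (i+1)) by simp [sumExp],
        ih i (by simpa using h),
        show sumExp (a :: l.take i) = a.2 + sumExp (l.take i) by simp [sumExp]]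
      ring

lemma getElem_append_cons₀ {α : Type*} (l₁ l₂ : List α) (a : α) :
    (l₁ ++ a :: l₂)[l₁.length]'(by simp) = a := by
  rw [List.getElem_append_right (le_refl _)]
  simp

lemma getElem_append_cons₁ {α : Type*} (l₁ l₂ : List α) (a b : α) :
    (l₁ ++ a :: b :: l₂)[l₁.length + 1]'(by simp) = b := by
  rw [List.getElem_append_right (by omega)]
  simp

lemma runs_sign_compat {w' : List (HLetter X)} (hred : HNNReducedWord UA UB w')
    {Q R : List (HLetter X)} {q ng : ℤ} {g G : FreeGroup X}
    (hshape : w' = Q ++ tPow q ++ HLetter.gen g :: (tPow ng ++ R))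
    (hchain : PhiZPow φ ng g G) :
    (tPow (q + ng) : List (HLetter X)) = tPow q ++ tPow ng := by
  by_cases hq : 0 ≤ q
  · by_cases hn : 0 ≤ ng
    · exact tPow_add_same_sign q ng (Or.inl ⟨hq, hn⟩)
    · by_cases hq0 : q = 0
      · subst hq0; rw [tPow_zero, zero_add]; simp
      · exfalso
        have hgB : g ∈ Subgroup.closure UB := hchain.memB_of_neg (by omega)
        refine hred.2 (Q ++ tPow (q-1)) [HLetter.gen g] (tPow (ng+1) ++ R) ?_ ?_ ?_
        · rw [hshape, tPow_pos_last q (by omega), tPow_neg_head ng (by omega)]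
          simp
        · rintro l hl
          simp only [List.mem_singleton] at hl
          exact ⟨g, hl⟩
        · simpa [evalH] using hgB
  · by_cases hn : 0 ≤ ng
    · by_cases hn0 : ng = 0
      · subst hn0; rw [tPow_zero, add_zero]; simp
      · exfalso
        have hgA : g ∈ Subgroup.closure UA := hchain.memA_of_pos (by omega)
        refine hred.1 (Q ++ tPow (q+1)) [HLetter.gen g] (tPow (ng-1) ++ R) ?_ ?_ ?_
        · rw [hshape, tPow_neg_last q (by omega), tPow_pos_head ng (by omega)]
          simp
        · rintro l hl
          simp only [List.mem_singleton] at hl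
          exact ⟨g, hl⟩
        · simpa [evalH] using hgA
    · exact tPow_add_same_sign q ng (Or.inr ⟨by omega, by omega⟩)

lemma wordOver_append {S : Set (FreeGroup X)} {a b : List (HLetter X)}
    (ha : WordOver S a) (hb : WordOver S b) : WordOver S (a ++ b) := by
  intro l hl u hu
  rcases List.mem_append.1 hl with h | h
  · exact ha l h u hu
  · exact hb l h u hu

lemma wordOver_tPow {S : Set (FreeGroup X)} {n : ℤ} : WordOver S (tPow n) := by
  intro l hl u hu
  subst hu
  exact absurd hl not_gen_mem_tPow

lemma wordOver_cons_gen {S : Set (FreeGroup X)} {y : FreeGroup X} {rest : List (HLetter X)}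
    (hy : y ∈ S) (h : WordOver S rest) : WordOver S (HLetter.gen y :: rest) := by
  intro l hl u hu
  rcases List.mem_cons.1 hl with h' | h'
  · subst hu
    cases h'
    exact hy
  · exact h l h' u hu

lemma wordOver_bw0 {S : Set (FreeGroup X)} {l : List (FreeGroup X × ℤ)}
    (h : ∀ r ∈ l, r.1 ∈ S) : WordOver S (bw0 l) := by
  induction l with
  | nil => intro l hl u hu; simp [bw0] at hl
  | cons r l ih =>
    rw [bw0_cons]
    exact wordOver_cons_gen (h r (by simp))
      (wordOver_append wordOver_tPow (ih fun r' hr' => h r' (by simp [hr'])))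

end HnnPaper
namespace HnnPaper

variable {X : Type*} {UA UB : Set (FreeGroup X)}
variable {φ : ↥(Subgroup.closure UA) ≃* ↥(Subgroup.closure UB)}

lemma skelB_getElem' {X : Type*} (c : ℤ) (l : List (FreeGroup X × ℤ)) (i : ℕ)
    (hi' : i < (skelB c l).length) :
    (skelB c l)[i] =
      ((l[i]'(by rw [← skelB_length c l]; exact hi')).1, c + sumExp (l.take i)) :=
  skelB_getElem c l i _

lemma main_half {w w' v v' : List (HLetter X)} {m m' : ℕ} {S : Set (FreeGroup X)}
    (hred' : HNNReducedWord UA UB w') (hS : WordOver S w')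
    (hSinv : ∀ x ∈ S, x⁻¹ ∈ S)
    (hc : CancelAt m w v) (hc' : CancelAt m' w' v') (hsim : Sim φ w w')
    (hlt : m < m') :
    ∃ w'', Sim φ w' w'' ∧ WordOver S w'' ∧
      (∃ z, CancelAt m w'' z) ∧ ∃ z, CancelAt m' w'' z := by
  obtain ⟨n0, pre, post, u, n', hm, hweq, -⟩ := hc
  obtain ⟨n0₂, pre₂, post₂, x, n₂, hm', hw'eq, -⟩ := hc'
  subst hm; subst hm'
  set k := pre.length with hk
  set k' := pre₂.length with hk'
  have hkk' : k < k' := by omega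
  set L : List (FreeGroup X × ℤ) := pre ++ (u,0) :: (u⁻¹,n') :: post with hL
  set L' : List (FreeGroup X × ℤ) := pre₂ ++ (x,0) :: (x⁻¹,n₂) :: post₂ with hL'
  have hwL : w = blockWord n0 L := by rw [hweq]; congr 1; rw [hL]; simp
  have hw'L : w' = blockWord n0₂ L' := by rw [hw'eq]; congr 1; rw [hL']; simp
  have hLlen : L.length = k + 2 + post.length := by rw [hL]; simp; omega
  have hL'len : L'.length = k' + 2 + post₂.length := by rw [hL']; simp; omega
  -- the invariant
  have hinv : Inv φ w w' := hsim.inv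
  rw [hwL, hw'L] at hinv
  unfold Inv at hinv
  rw [skel_blockWord, skel_blockWord, zero_add, zero_add] at hinv
  have hlen : L.length = L'.length := by
    have := hinv.length_eq; rwa [skelB_length, skelB_length] at this
  have hkL : k < L.length := by omega
  have hk1L : k + 1 < L.length := by omega
  have hkL' : k < L'.length := by omega
  have hk1L' : k + 1 < L'.length := by omega
  -- entries of L
  have eL0 : L[k]'hkL = (u, 0) := getElem_append_cons₀ pre _ _
  have eL1 : L[k+1]'hk1L = (u⁻¹, n') := getElem_append_cons₁ pre _ _ _
  have htake : L.take k = pre := List.take_left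
  -- entries of L'
  obtain ⟨⟨g, ng⟩, hgng⟩ : ∃ p : FreeGroup X × ℤ, L'[k]'hkL' = p := ⟨_, rfl⟩
  obtain ⟨⟨h1, nh⟩, hh1nh⟩ : ∃ p : FreeGroup X × ℤ, L'[k+1]'hk1L' = p := ⟨_, rfl⟩
  have hsum1 : sumExp (L.take (k+1)) = sumExp pre := by
    rw [sumExp_take_succ L k hkL, htake, eL0]; simp
  have hsum2 : sumExp (L'.take (k+1)) = sumExp (L'.take k) + ng := by
    rw [sumExp_take_succ L' k hkL', hgng]
  -- the two pair relations
  have hPg : PhiZPow φ (n0₂ + sumExp (L'.take k) - (n0 + sumExp pre)) u g := by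
    have hq1 : k < (skelB n0 L).length := by rw [skelB_length]; omega
    have hq2 : k < (skelB n0₂ L').length := by rw [skelB_length]; omega
    have t1 := hinv.get (i := k) hq1 hq2
    unfold pairRel at t1
    rw [List.get_eq_getElem, List.get_eq_getElem, skelB_getElem' n0 L k hq1,
      skelB_getElem' n0₂ L' k hq2, eL0, htake, hgng] at t1
    simpa using t1
  have hPh : PhiZPow φ (n0₂ + (sumExp (L'.take k) + ng) - (n0 + sumExp pre)) u⁻¹ h1 := by
    have hq1 : k + 1 < (skelB n0 L).length := by rw [skelB_length]; omega
    have hq2 : k + 1 < (skelB n0₂ L').length := by rw [skelB_length]; omega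
    have t2 := hinv.get (i := k+1) hq1 hq2
    unfold pairRel at t2
    rw [List.get_eq_getElem, List.get_eq_getElem, skelB_getElem' n0 L (k+1) hq1,
      skelB_getElem' n0₂ L' (k+1) hq2, eL1, hsum1, hh1nh, hsum2] at t2
    simpa using t2
  -- the chain along which we shift the `t`-run
  have hchain : PhiZPow φ ng g h1⁻¹ := by
    have h2' := hPh.inv
    rw [inv_inv] at h2'
    have hcomp := PhiZPow.comp hPg h2'
    have he : n0₂ + (sumExp (L'.take k) + ng) - (n0 + sumExp pre) -
        (n0₂ + sumExp (L'.take k) - (n0 + sumExp pre)) = ng := by ring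
    rwa [he] at hcomp
  -- splitting of `L'`
  have hL'split : L' = L'.take k ++ (g, ng) :: L'.drop (k+1) := by
    conv_lhs => rw [← List.take_append_drop k L']
    rw [List.drop_eq_getElem_cons hkL', hgng]
  have hBsplit : L'.drop (k+1) = (h1, nh) :: L'.drop (k+2) := by
    rw [List.drop_eq_getElem_cons hk1L', hh1nh]
  have hdropPre : L'.drop (k+1) = pre₂.drop (k+1) ++ (x,0) :: (x⁻¹,n₂) :: post₂ := by
    rw [hL', List.drop_append, show k+1 - pre₂.length = 0 by omega,
      List.drop_zero]
  -- shape of `w'` and the shift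
  have hw'shape : w' = (tPow n0₂ ++ bw0 (L'.take k)) ++
      HLetter.gen g :: (tPow ng ++ bw0 (L'.drop (k+1))) := by
    rw [hw'L]
    conv_lhs => rw [hL'split]
    rw [blockWord_eq, bw0_append, bw0_cons]
    simp [List.append_assoc]
  have hshift := sim_shift_left (φ := φ) (tPow n0₂ ++ bw0 (L'.take k))
    (bw0 (L'.drop (k+1))) ng hchain
  set w'' : List (HLetter X) := ((tPow n0₂ ++ bw0 (L'.take k)) ++ tPow ng) ++
      HLetter.gen h1⁻¹ :: bw0 (L'.drop (k+1)) with hw''def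
  have hsim'' : Sim φ w' w'' := hw'shape ▸ hshift
  have hSL' : ∀ r ∈ L', r.1 ∈ S := wordOver_blockWord.mp (hw'L ▸ hS)
  refine ⟨w'', hsim'', ?_, ?_, ?_⟩
  · -- WordOver
    rw [hw''def]
    refine wordOver_append (wordOver_append (wordOver_append wordOver_tPow
      (wordOver_bw0 ?_)) wordOver_tPow) (wordOver_cons_gen ?_ (wordOver_bw0 ?_))
    · intro r hr; exact hSL' r (List.mem_of_mem_take hr)
    · refine hSinv h1 ?_
      have hmem : (h1, nh) ∈ L' := by rw [← hh1nh]; exact List.getElem_mem _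
      exact hSL' (h1, nh) hmem
    · intro r hr; exact hSL' r (List.mem_of_mem_drop hr)
  · -- CancelAt at position k+1
    rcases Nat.eq_zero_or_pos k with hk0 | hk0
    · have htk : L'.take k = [] := by rw [hk0]; exact List.take_zero
      have hQ0 : w' = ([] : List (HLetter X)) ++ tPow n0₂ ++
          HLetter.gen g :: (tPow ng ++ bw0 (L'.drop (k+1))) := by
        rw [hw'shape, htk]; simp [bw0]
      have hsc : (tPow (n0₂ + ng) : List (HLetter X)) = tPow n0₂ ++ tPow ng :=
        runs_sign_compat hred' hQ0 hchain
      have hw''blk : w'' = blockWord (n0₂ + ng) ((h1⁻¹, 0) :: L'.drop (k+1)) := by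
        rw [hw''def, htk, blockWord_eq, hsc, bw0_cons, tPow_zero]
        simp [bw0, List.append_assoc]
      refine ⟨blockWord (n0₂ + ng + nh) (L'.drop (k+2)), n0₂ + ng, [], L'.drop (k+2),
        h1⁻¹, nh, by simpa using hk0, ?_, Or.inl ⟨rfl, rfl⟩⟩
      rw [hw''blk]
      congr 1
      rw [hBsplit]
      simp
    · have hAne : L'.take k ≠ [] := by
        apply List.ne_nil_of_length_pos
        rw [List.length_take]
        omega
      obtain ⟨⟨p, q⟩, hpq⟩ : ∃ r, (L'.take k).getLast hAne = r := ⟨_, rfl⟩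
      have hAsplit : (L'.take k).dropLast ++ [(p, q)] = L'.take k := by
        rw [← hpq]; exact List.dropLast_append_getLast hAne
      have hQshape : w' = ((tPow n0₂ ++ bw0 ((L'.take k).dropLast)) ++ [HLetter.gen p]) ++
          tPow q ++ HLetter.gen g :: (tPow ng ++ bw0 (L'.drop (k+1))) := by
        rw [hw'shape, ← hAsplit, bw0_append, bw0_cons]
        simp [bw0, List.append_assoc]
      have hsc : (tPow (q + ng) : List (HLetter X)) = tPow q ++ tPow ng :=
        runs_sign_compat hred' hQshape hchain
      have hw''blk : w'' = blockWord n0₂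
          ((L'.take k).dropLast ++ (p, q + ng) :: (h1⁻¹, 0) :: L'.drop (k+1)) := by
        rw [hw''def, ← hAsplit, blockWord_eq, bw0_append, bw0_append, bw0_cons, bw0_cons,
          bw0_cons, hsc, tPow_zero]
        simp [bw0, List.append_assoc]
      refine ⟨blockWord n0₂ ((L'.take k).dropLast ++ [(p, q + ng + nh)] ++ L'.drop (k+2)),
        n0₂, (L'.take k).dropLast ++ [(p, q + ng)], L'.drop (k+2), h1⁻¹, nh, ?_, ?_,
        Or.inr ⟨(L'.take k).dropLast, p, q + ng, rfl, rfl⟩⟩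
      · rw [List.length_append, List.length_dropLast, List.length_take]
        simp
        omega
      · rw [hw''blk]
        congr 1
        rw [hBsplit]
        simp [inv_inv]
  · -- CancelAt at position k'+1
    rcases Nat.eq_zero_or_pos k with hk0 | hk0
    · have htk : L'.take k = [] := by rw [hk0]; exact List.take_zero
      have hQ0 : w' = ([] : List (HLetter X)) ++ tPow n0₂ ++
          HLetter.gen g :: (tPow ng ++ bw0 (L'.drop (k+1))) := by
        rw [hw'shape, htk]; simp [bw0]
      have hsc : (tPow (n0₂ + ng) : List (HLetter X)) = tPow n0₂ ++ tPow ng :=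
        runs_sign_compat hred' hQ0 hchain
      have hw''blk : w'' = blockWord (n0₂ + ng) ((h1⁻¹, 0) :: L'.drop (k+1)) := by
        rw [hw''def, htk, blockWord_eq, hsc, bw0_cons, tPow_zero]
        simp [bw0, List.append_assoc]
      set PP : List (FreeGroup X × ℤ) := (h1⁻¹, (0:ℤ)) :: pre₂.drop (k+1) with hPP
      have hne : PP ≠ [] := by simp [hPP]
      refine ⟨blockWord (n0₂ + ng)
          (PP.dropLast ++ [((PP.getLast hne).1, (PP.getLast hne).2 + n₂)] ++ post₂),
        n0₂ + ng, PP, post₂, x, n₂, ?_, ?_, Or.inr ⟨PP.dropLast, (PP.getLast hne).1,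
          (PP.getLast hne).2, ?_, rfl⟩⟩
      · rw [hPP]
        simp only [List.length_cons, List.length_drop]
        omega
      · rw [hw''blk]
        congr 1
        rw [hPP, hdropPre]
        simp
      · rw [Prod.mk.eta]
        exact (List.dropLast_append_getLast hne).symm
    · have hAne : L'.take k ≠ [] := by
        apply List.ne_nil_of_length_pos
        rw [List.length_take]
        omega
      obtain ⟨⟨p, q⟩, hpq⟩ : ∃ r, (L'.take k).getLast hAne = r := ⟨_, rfl⟩
      have hAsplit : (L'.take k).dropLast ++ [(p, q)] = L'.take k := by
        rw [← hpq]; exact List.dropLast_append_getLast hAne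
      have hQshape : w' = ((tPow n0₂ ++ bw0 ((L'.take k).dropLast)) ++ [HLetter.gen p]) ++
          tPow q ++ HLetter.gen g :: (tPow ng ++ bw0 (L'.drop (k+1))) := by
        rw [hw'shape, ← hAsplit, bw0_append, bw0_cons]
        simp [bw0, List.append_assoc]
      have hsc : (tPow (q + ng) : List (HLetter X)) = tPow q ++ tPow ng :=
        runs_sign_compat hred' hQshape hchain
      have hw''blk : w'' = blockWord n0₂
          ((L'.take k).dropLast ++ (p, q + ng) :: (h1⁻¹, 0) :: L'.drop (k+1)) := by
        rw [hw''def, ← hAsplit, blockWord_eq, bw0_append, bw0_append, bw0_cons, bw0_cons,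
          bw0_cons, hsc, tPow_zero]
        simp [bw0, List.append_assoc]
      set PP : List (FreeGroup X × ℤ) :=
        (L'.take k).dropLast ++ (p, q + ng) :: (h1⁻¹, (0:ℤ)) :: pre₂.drop (k+1) with hPP
      have hne : PP ≠ [] := by simp [hPP]
      refine ⟨blockWord n0₂
          (PP.dropLast ++ [((PP.getLast hne).1, (PP.getLast hne).2 + n₂)] ++ post₂),
        n0₂, PP, post₂, x, n₂, ?_, ?_, Or.inr ⟨PP.dropLast, (PP.getLast hne).1,
          (PP.getLast hne).2, ?_, rfl⟩⟩
      · rw [hPP]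
        simp only [List.length_append, List.length_cons, List.length_drop,
          List.length_dropLast, List.length_take]
        omega
      · rw [hw''blk]
        congr 1
        rw [hPP, hdropPre]
        simp
      · rw [Prod.mk.eta]
        exact (List.dropLast_append_getLast hne).symm

end HnnPaper

open HnnPaper

theorem statement_6
    (X : Type*) [Finite X]
    (UH UA UB : Set (FreeGroup X))
    (hUH : IsFreeBasis UH) (hUAH : UA ⊆ UH) (hUBH : UB ⊆ UH)
    (φ : ↥(Subgroup.closure UA) ≃* ↥(Subgroup.closure UB))
    (hφ : ∀ a : ↥(Subgroup.closure UA), (a : FreeGroup X) ∈ UA ∪ UA⁻¹ ↔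
      ((φ a : ↥(Subgroup.closure UB)) : FreeGroup X) ∈ UB ∪ UB⁻¹)
    (w w' v v' : List (HLetter X)) (m m' : ℕ)
    (hw : WordOver (UH ∪ UH⁻¹) w) (hw' : WordOver (UH ∪ UH⁻¹) w')
    (hv : WordOver (UH ∪ UH⁻¹) v) (hv' : WordOver (UH ∪ UH⁻¹) v')
    (hwred : HNNReducedWord UA UB w) (hw'red : HNNReducedWord UA UB w')
    (hvred : HNNReducedWord UA UB v) (hv'red : HNNReducedWord UA UB v')
    (hc : CancelAt m w v) (hsim : Sim φ w w') (hc' : CancelAt m' w' v') :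
    ∃ w'' : List (HLetter X), WordOver (UH ∪ UH⁻¹) w'' ∧ Sim φ w w'' ∧
      (∃ z, CancelAt m w'' z) ∧ (∃ z, CancelAt m' w'' z) := by
  have hSinv : ∀ y ∈ (UH ∪ UH⁻¹), y⁻¹ ∈ (UH ∪ UH⁻¹) := by
    intro y hy
    rcases hy with h | h
    · exact Or.inr (Set.mem_inv.2 (by rwa [inv_inv]))
    · exact Or.inl (Set.mem_inv.1 h)
  rcases lt_trichotomy m m' with hlt | heq | hgt
  · obtain ⟨w'', hs, hwo, h1, h2⟩ := main_half hw'red hw' hSinv hc hc' hsim hlt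
    exact ⟨w'', hwo, hsim.trans hs, h1, h2⟩
  · subst heq
    exact ⟨w, hw, Relation.ReflTransGen.refl, ⟨v, hc⟩, ⟨v, hc⟩⟩
  · obtain ⟨w'', hs, hwo, h2, h1⟩ := main_half hwred hw hSinv hc' hc hsim.symm hgt
    exact ⟨w'', hwo, hs, h1, h2⟩
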